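/- Let S be an invertible n×n, U an m×n, and V an n×m complex matrix, let ε ∈ {1, −1}, and suppose the n×n matrix K satisfies S⁻¹ K − K S* = V U. For x ∈ ℤ and t ∈ ℝ set Ξ(x,t) = Sˣ · exp(−i t (S + S⁻¹ − 2I)), and assume that Ξ(x,t)*⁻¹ − ε K* Ξ(x,t) K and Ξ(x,t)⁻¹ − ε K Ξ(x,t)* K* are invertible for all (x,t) ∈ ℤ×ℝ. Then q = U (Ξ*⁻¹ − ε K* Ξ K)⁻¹ V* and p = ε U Ξ* K* (Ξ⁻¹ − ε K Ξ* K*)⁻¹ V satisfy the m×m matrix Ablowitz–Ladik equations: i q̇ + q⁺ − 2q + q⁻ − ε (q⁺ q* q + q q* q⁻) = 0 and p⁺ − p = −ε q⁺ q*. -/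

import Mathlib

open Matrix

attribute [local instance] Matrix.normedAddCommGroup Matrix.normedSpace

/-- Entrywise complex conjugate of a matrix. -/
def mconj {a b : Type*} (A : Matrix a b ℂ) : Matrix a b ℂ :=
  A.map (starRingEnd ℂ)

/-- Partial derivative with respect to the continuous (time) variable of a function
of a discrete variable `x : ℤ` and `t : ℝ`. -/
noncomputable def pdt' {α : Type*} [NormedAddCommGroup α] [NormedSpace ℝ α]
    (f : ℤ → ℝ → α) : ℤ → ℝ → α :=
  fun x t => deriv (fun s => f x s) t

section Prelude

attribute [-instance] Matrix.normedAddCommGroup Matrix.normedSpace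

open NormedSpace

variable {nn mm kk : ℕ}

/-! ### mconj lemmas -/

theorem mconj_apply {a b : Type*} (A : Matrix a b ℂ) (i : a) (j : b) :
    mconj A i j = starRingEnd ℂ (A i j) := rfl

theorem mconj_mconj {a b : Type*} (A : Matrix a b ℂ) : mconj (mconj A) = A := by
  ext i j; simp [mconj_apply]

theorem mconj_mul (A : Matrix (Fin nn) (Fin mm) ℂ) (B : Matrix (Fin mm) (Fin kk) ℂ) :
    mconj (A * B) = mconj A * mconj B := by
  ext i j
  simp [mconj_apply, Matrix.mul_apply, map_sum]

theorem mconj_add {a b : Type*} (A B : Matrix a b ℂ) :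
    mconj (A + B) = mconj A + mconj B := by
  ext i j; simp [mconj_apply]

theorem mconj_sub {a b : Type*} (A B : Matrix a b ℂ) :
    mconj (A - B) = mconj A - mconj B := by
  ext i j; simp [mconj_apply]

theorem mconj_neg {a b : Type*} (A : Matrix a b ℂ) : mconj (-A) = -(mconj A) := by
  ext i j; simp [mconj_apply]

theorem mconj_smul {a b : Type*} (c : ℂ) (A : Matrix a b ℂ) :
    mconj (c • A) = starRingEnd ℂ c • mconj A := by
  ext i j; simp [mconj_apply]

theorem mconj_smulR {a b : Type*} (r : ℝ) (A : Matrix a b ℂ) :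
    mconj (r • A) = r • mconj A := by
  ext i j
  simp [mconj_apply, Complex.real_smul]

theorem mconj_one : mconj (1 : Matrix (Fin nn) (Fin nn) ℂ) = 1 := by
  ext i j
  by_cases h : i = j <;> simp [mconj_apply, Matrix.one_apply, h]

theorem mconj_two : mconj (2 : Matrix (Fin nn) (Fin nn) ℂ) = 2 := by
  have : (2 : Matrix (Fin nn) (Fin nn) ℂ) = 1 + 1 := by norm_num
  rw [this, mconj_add, mconj_one]

theorem mconj_isUnit {A : Matrix (Fin nn) (Fin nn) ℂ} (h : IsUnit A) : IsUnit (mconj A) := by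
  rw [Matrix.isUnit_iff_isUnit_det] at h ⊢
  have : (mconj A).det = starRingEnd ℂ A.det := (RingHom.map_det (starRingEnd ℂ) A).symm
  rw [this]
  exact h.map (starRingEnd ℂ)

theorem mconj_inv {A : Matrix (Fin nn) (Fin nn) ℂ} (h : IsUnit A) :
    mconj (A⁻¹) = (mconj A)⁻¹ := by
  symm
  apply Matrix.inv_eq_right_inv
  rw [← mconj_mul, Matrix.mul_nonsing_inv _ ((Matrix.isUnit_iff_isUnit_det A).mp h), mconj_one]

theorem mconj_eq_conjTranspose_transpose (A : Matrix (Fin nn) (Fin nn) ℂ) :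
    mconj A = (Aᴴ)ᵀ := by
  ext i j; simp [mconj_apply, Matrix.conjTranspose_apply, Matrix.transpose_apply]

theorem mconj_exp (A : Matrix (Fin nn) (Fin nn) ℂ) :
    mconj (exp A) = exp (mconj A) := by
  rw [mconj_eq_conjTranspose_transpose, mconj_eq_conjTranspose_transpose,
    ← Matrix.exp_conjTranspose, ← Matrix.exp_transpose]

/-! ### unit cancellation helpers -/

theorem mcan1 {M : Matrix (Fin nn) (Fin nn) ℂ} (h : IsUnit M) : M * M⁻¹ = 1 :=
  Matrix.mul_nonsing_inv M ((Matrix.isUnit_iff_isUnit_det M).mp h)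

theorem mcan2 {M : Matrix (Fin nn) (Fin nn) ℂ} (h : IsUnit M) : M⁻¹ * M = 1 :=
  Matrix.nonsing_inv_mul M ((Matrix.isUnit_iff_isUnit_det M).mp h)

theorem mcan3 {M : Matrix (Fin nn) (Fin nn) ℂ} (h : IsUnit M)
    {b : Type*} [Fintype b] (X : Matrix (Fin nn) b ℂ) : M * (M⁻¹ * X) = X := by
  rw [← Matrix.mul_assoc, mcan1 h, Matrix.one_mul]

theorem mcan4 {M : Matrix (Fin nn) (Fin nn) ℂ} (h : IsUnit M)
    {b : Type*} [Fintype b] (X : Matrix (Fin nn) b ℂ) : M⁻¹ * (M * X) = X := by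
  rw [← Matrix.mul_assoc, mcan2 h, Matrix.one_mul]

theorem comm_inv {A B : Matrix (Fin nn) (Fin nn) ℂ} (hA : IsUnit A) (h : A * B = B * A) :
    A⁻¹ * B = B * A⁻¹ := by
  calc A⁻¹ * B = A⁻¹ * B * (A * A⁻¹) := by rw [mcan1 hA, Matrix.mul_one]
  _ = A⁻¹ * (B * A) * A⁻¹ := by simp only [Matrix.mul_assoc]
  _ = A⁻¹ * (A * B) * A⁻¹ := by rw [h]
  _ = B * A⁻¹ := by rw [← Matrix.mul_assoc, mcan2 hA, Matrix.one_mul]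

/-! ### entrywise derivative lemma (via the `L∞` operator norm world) -/

theorem entryDeriv (U' : Matrix (Fin mm) (Fin nn) ℂ) (W' : Matrix (Fin nn) (Fin mm) ℂ)
    (N1 C1 C2 N2 C3 : Matrix (Fin nn) (Fin nn) ℂ) (ε : ℂ)
    (F : ℝ → Matrix (Fin nn) (Fin nn) ℂ)
    (hF : ∀ s : ℝ, F s = exp (s • N1) * C1 - ε • (C2 * exp (s • N2) * C3))
    (hu : ∀ s : ℝ, IsUnit (F s)) (t : ℝ) (i : Fin mm) (j : Fin mm) :
    HasDerivAt (fun s : ℝ => (U' * (F s)⁻¹ * W') i j)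
      ((-(U' * ((F t)⁻¹ * (N1 * exp (t • N1) * C1 - ε • (C2 * (N2 * exp (t • N2)) * C3)) * (F t)⁻¹) * W')) i j) t := by
  letI : SeminormedRing (Matrix (Fin nn) (Fin nn) ℂ) := Matrix.linftyOpSemiNormedRing
  letI : NormedRing (Matrix (Fin nn) (Fin nn) ℂ) := Matrix.linftyOpNormedRing
  letI : NormedAlgebra ℝ (Matrix (Fin nn) (Fin nn) ℂ) := Matrix.linftyOpNormedAlgebra
  letI : NormedAlgebra ℂ (Matrix (Fin nn) (Fin nn) ℂ) := Matrix.linftyOpNormedAlgebra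
  have h1 : HasDerivAt (fun u : ℝ => exp (u • N1)) (N1 * exp (t • N1)) t := by
    have := hasDerivAt_exp_smul_const' (𝕂 := ℝ) N1 t
    exact this
  have h2 : HasDerivAt (fun u : ℝ => exp (u • N2)) (N2 * exp (t • N2)) t := by
    have := hasDerivAt_exp_smul_const' (𝕂 := ℝ) N2 t
    exact this
  have hFd : HasDerivAt F (N1 * exp (t • N1) * C1 - ε • (C2 * (N2 * exp (t • N2)) * C3)) t := by
    rw [funext hF]
    exact (h1.mul_const C1).sub ((((h2.const_mul C2)).mul_const C3).const_smul ε)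
  have hInv : HasDerivAt (fun s => (F s)⁻¹)
      (-((F t)⁻¹ * (N1 * exp (t • N1) * C1 - ε • (C2 * (N2 * exp (t • N2)) * C3)) * (F t)⁻¹)) t := by
    have hcomp := (hasFDerivAt_ringInverse (𝕜 := ℝ) (hu t).unit).comp_hasDerivAt t hFd
    have heq : (Ring.inverse ∘ F) = fun s => (F s)⁻¹ := by
      funext s; simp [Function.comp, Matrix.nonsing_inv_eq_ringInverse]
    rw [heq] at hcomp
    have hval : (↑(hu t).unit⁻¹ : Matrix (Fin nn) (Fin nn) ℂ) = (F t)⁻¹ := by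
      rw [Matrix.coe_units_inv, IsUnit.unit_spec]
    simp only [ContinuousLinearMap.neg_apply, ContinuousLinearMap.mulLeftRight_apply,
      hval] at hcomp
    exact hcomp
  let lm : Matrix (Fin nn) (Fin nn) ℂ →ₗ[ℝ] ℂ :=
    { toFun := fun G => (U' * G * W') i j
      map_add' := by intro a b; simp [Matrix.mul_add, Matrix.add_mul]
      map_smul' := by intro c a; simp [Matrix.mul_smul, Matrix.smul_mul] }
  have := (lm.toContinuousLinearMap.hasFDerivAt).comp_hasDerivAt t hInv
  refine this.congr_deriv ?_
  change (U' * (-_ : Matrix (Fin nn) (Fin nn) ℂ) * W') i j = _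
  simp [Matrix.mul_neg, Matrix.neg_mul]


theorem mcan1' {nn : ℕ} {M : Matrix (Fin nn) (Fin nn) ℂ} (h : IsUnit M) : M * M⁻¹ = 1 :=
  Matrix.mul_nonsing_inv M ((Matrix.isUnit_iff_isUnit_det M).mp h)

theorem mcan2' {nn : ℕ} {M : Matrix (Fin nn) (Fin nn) ℂ} (h : IsUnit M) : M⁻¹ * M = 1 :=
  Matrix.nonsing_inv_mul M ((Matrix.isUnit_iff_isUnit_det M).mp h)

theorem mcan3' {nn : ℕ} {M : Matrix (Fin nn) (Fin nn) ℂ} (h : IsUnit M)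
    {b : Type*} [Fintype b] (X : Matrix (Fin nn) b ℂ) : M * (M⁻¹ * X) = X := by
  rw [← Matrix.mul_assoc, mcan1' h, Matrix.one_mul]

theorem mcan4' {nn : ℕ} {M : Matrix (Fin nn) (Fin nn) ℂ} (h : IsUnit M)
    {b : Type*} [Fintype b] (X : Matrix (Fin nn) b ℂ) : M⁻¹ * (M * X) = X := by
  rw [← Matrix.mul_assoc, mcan2' h, Matrix.one_mul]

set_option maxHeartbeats 2000000 in
theorem core {n m : ℕ}
    (S T K L : Matrix (Fin n) (Fin n) ℂ)
    (U Y : Matrix (Fin m) (Fin n) ℂ) (V W : Matrix (Fin n) (Fin m) ℂ)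
    (ε : ℂ)
    (hS : IsUnit S) (hTU : IsUnit T)
    (Ξ Th : ℤ → ℝ → Matrix (Fin n) (Fin n) ℂ)
    (hXiU : ∀ x s, IsUnit (Ξ x s)) (hThU : ∀ x s, IsUnit (Th x s))
    (hXp : ∀ x s, Ξ (x+1) s = S * Ξ x s)
    (hXm : ∀ x s, Ξ (x-1) s = S⁻¹ * Ξ x s)
    (hThp : ∀ x s, Th (x+1) s = T * Th x s)
    (hThm : ∀ x s, Th (x-1) s = T⁻¹ * Th x s)
    (hcommSXi : ∀ x s, S * Ξ x s = Ξ x s * S)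
    (hTTh : ∀ x s, T * Th x s = Th x s * T)
    (hSyl : S⁻¹ * K - K * T = V * U)
    (hSylc : T⁻¹ * L - L * S = W * Y)
    (Af Bf : ℤ → ℝ → Matrix (Fin n) (Fin n) ℂ)
    (hAf : ∀ x s, Af x s = (Th x s)⁻¹ - ε • (L * Ξ x s * K))
    (hBf : ∀ x s, Bf x s = (Ξ x s)⁻¹ - ε • (K * Th x s * L))
    (hAU : ∀ x s, IsUnit (Af x s)) (hBU : ∀ x s, IsUnit (Bf x s)) :
    (∀ x s, (Af x s)⁻¹ * (((2:ℂ) • Af x s - Af (x+1) s - Af (x-1) s) * (Af x s)⁻¹)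
      + (Af (x+1) s)⁻¹ - (2:ℂ) • (Af x s)⁻¹ + (Af (x-1) s)⁻¹
      - ε • ((Af (x+1) s)⁻¹ * (W * (Y * ((Bf x s)⁻¹ * (V * (U * (Af x s)⁻¹)))))
           + (Af x s)⁻¹ * (W * (Y * ((Bf x s)⁻¹ * (V * (U * (Af (x-1) s)⁻¹)))))) = 0) ∧
    (∀ x s, (Af (x+1) s)⁻¹ * (L * (S * Ξ x s)) - (Af x s)⁻¹ * (L * Ξ x s)
      + (Af (x+1) s)⁻¹ * (W * (Y * (Bf x s)⁻¹)) = 0) ∧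
    (∀ x s, Th x s * (L * (Bf x s)⁻¹) = (Af x s)⁻¹ * (L * Ξ x s)) ∧
    (∀ x s, Af (x+1) s = T⁻¹ * (Th x s)⁻¹ - ε • (L * (S * Ξ x s) * K)) ∧
    (∀ x s, Af (x-1) s = T * (Th x s)⁻¹ - ε • (L * (S⁻¹ * Ξ x s) * K)) := by
  -- commutation/inversion helpers
  have hdS := (Matrix.isUnit_iff_isUnit_det S).mp hS
  have hdT := (Matrix.isUnit_iff_isUnit_det T).mp hTU
  have hSiXi : ∀ x s, S⁻¹ * Ξ x s = Ξ x s * S⁻¹ := by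
    intro x s
    calc S⁻¹ * Ξ x s = S⁻¹ * (Ξ x s * S) * S⁻¹ := by
          simp only [Matrix.mul_assoc, mcan1' hS, Matrix.mul_one]
      _ = S⁻¹ * (S * Ξ x s) * S⁻¹ := by rw [hcommSXi]
      _ = Ξ x s * S⁻¹ := by rw [← Matrix.mul_assoc, mcan2' hS, Matrix.one_mul]
  have hTiTh : ∀ x s, T⁻¹ * Th x s = Th x s * T⁻¹ := by
    intro x s
    calc T⁻¹ * Th x s = T⁻¹ * (Th x s * T) * T⁻¹ := by
          simp only [Matrix.mul_assoc, mcan1' hTU, Matrix.mul_one]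
      _ = T⁻¹ * (T * Th x s) * T⁻¹ := by rw [hTTh]
      _ = Th x s * T⁻¹ := by rw [← Matrix.mul_assoc, mcan2' hTU, Matrix.one_mul]
  have hTiThi : ∀ x s, T⁻¹ * (Th x s)⁻¹ = (Th x s)⁻¹ * T⁻¹ := by
    intro x s
    rw [← Matrix.mul_inv_rev, ← Matrix.mul_inv_rev, hTTh]
  have hTThi : ∀ x s, T * (Th x s)⁻¹ = (Th x s)⁻¹ * T := by
    intro x s
    calc T * (Th x s)⁻¹ = (T⁻¹)⁻¹ * (Th x s)⁻¹ := by rw [Matrix.nonsing_inv_nonsing_inv T hdT]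
      _ = ((Th x s) * T⁻¹)⁻¹ := by rw [Matrix.mul_inv_rev]
      _ = (T⁻¹ * Th x s)⁻¹ := by rw [hTiTh]
      _ = (Th x s)⁻¹ * (T⁻¹)⁻¹ := by rw [Matrix.mul_inv_rev]
      _ = (Th x s)⁻¹ * T := by rw [Matrix.nonsing_inv_nonsing_inv T hdT]
  have hSiXii : ∀ x s, S⁻¹ * (Ξ x s)⁻¹ = (Ξ x s)⁻¹ * S⁻¹ := by
    intro x s
    rw [← Matrix.mul_inv_rev, ← Matrix.mul_inv_rev, hcommSXi]
  have hSXii : ∀ x s, S * (Ξ x s)⁻¹ = (Ξ x s)⁻¹ * S := by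
    intro x s
    calc S * (Ξ x s)⁻¹ = (S⁻¹)⁻¹ * (Ξ x s)⁻¹ := by rw [Matrix.nonsing_inv_nonsing_inv S hdS]
      _ = ((Ξ x s) * S⁻¹)⁻¹ := by rw [Matrix.mul_inv_rev]
      _ = (S⁻¹ * Ξ x s)⁻¹ := by rw [hSiXi]
      _ = (Ξ x s)⁻¹ * (S⁻¹)⁻¹ := by rw [Matrix.mul_inv_rev]
      _ = (Ξ x s)⁻¹ * S := by rw [Matrix.nonsing_inv_nonsing_inv S hdS]
  -- Sylvester rearrangements
  have hLS : L * S = T⁻¹ * L - W * Y := by rw [← hSylc]; abel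
  have hKT : K * T = S⁻¹ * K - V * U := by rw [← hSyl]; abel
  have hLSi : L * S⁻¹ = T * L + T * (W * Y) * S⁻¹ := by
    have h2 : T * L = L * S⁻¹ - T * (W * Y) * S⁻¹ := by
      calc T * L = T * ((L * S) * S⁻¹) := by
            rw [Matrix.mul_assoc, mcan1' hS, Matrix.mul_one]
        _ = T * ((T⁻¹ * L - W * Y) * S⁻¹) := by rw [hLS]
        _ = T * (T⁻¹ * (L * S⁻¹)) - T * (W * Y) * S⁻¹ := by
            simp only [sub_mul, mul_sub, Matrix.mul_assoc]
        _ = L * S⁻¹ - T * (W * Y) * S⁻¹ := by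
            rw [← Matrix.mul_assoc T T⁻¹ _, mcan1' hTU, Matrix.one_mul]
    rw [h2]; abel
  -- site formulas
  have hApEq : ∀ x s, Af (x+1) s = T⁻¹ * (Th x s)⁻¹ - ε • (L * (S * Ξ x s) * K) := by
    intro x s
    rw [hAf, hThp, hXp, Matrix.mul_inv_rev, hTiThi]
  have hAmEq : ∀ x s, Af (x-1) s = T * (Th x s)⁻¹ - ε • (L * (S⁻¹ * Ξ x s) * K) := by
    intro x s
    rw [hAf, hThm, hXm, Matrix.mul_inv_rev, Matrix.nonsing_inv_nonsing_inv T hdT, ← hTThi]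
  have hBpEq : ∀ x s, Bf (x+1) s = S⁻¹ * (Ξ x s)⁻¹ - ε • (K * (T * Th x s) * L) := by
    intro x s
    rw [hBf, hThp, hXp, Matrix.mul_inv_rev, hSiXii]
  have hBmEq : ∀ x s, Bf (x-1) s = S * (Ξ x s)⁻¹ - ε • (K * (T⁻¹ * Th x s) * L) := by
    intro x s
    rw [hBf, hThm, hXm, Matrix.mul_inv_rev, Matrix.nonsing_inv_nonsing_inv S hdS, ← hSXii]
  -- quantified commutation helpers
  have qXiS : ∀ (x : ℤ) (s : ℝ) {j : ℕ} (Z : Matrix (Fin n) (Fin j) ℂ),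
      Ξ x s * (S * Z) = S * (Ξ x s * Z) := by
    intro x s j Z; rw [← Matrix.mul_assoc, ← hcommSXi, Matrix.mul_assoc]
  have qXiSi : ∀ (x : ℤ) (s : ℝ) {j : ℕ} (Z : Matrix (Fin n) (Fin j) ℂ),
      Ξ x s * (S⁻¹ * Z) = S⁻¹ * (Ξ x s * Z) := by
    intro x s j Z; rw [← Matrix.mul_assoc, ← hSiXi, Matrix.mul_assoc]
  have qThT : ∀ (x : ℤ) (s : ℝ) {j : ℕ} (Z : Matrix (Fin n) (Fin j) ℂ),
      Th x s * (T * Z) = T * (Th x s * Z) := by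
    intro x s j Z; rw [← Matrix.mul_assoc, ← hTTh, Matrix.mul_assoc]
  have qThiT : ∀ (x : ℤ) (s : ℝ) {j : ℕ} (Z : Matrix (Fin n) (Fin j) ℂ),
      (Th x s)⁻¹ * (T * Z) = T * ((Th x s)⁻¹ * Z) := by
    intro x s j Z; rw [← Matrix.mul_assoc, ← hTThi, Matrix.mul_assoc]
  have qThiTi : ∀ (x : ℤ) (s : ℝ) {j : ℕ} (Z : Matrix (Fin n) (Fin j) ℂ),
      (Th x s)⁻¹ * (T⁻¹ * Z) = T⁻¹ * ((Th x s)⁻¹ * Z) := by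
    intro x s j Z; rw [← Matrix.mul_assoc, ← hTiThi, Matrix.mul_assoc]
  have qXiiSi : ∀ (x : ℤ) (s : ℝ) {j : ℕ} (Z : Matrix (Fin n) (Fin j) ℂ),
      (Ξ x s)⁻¹ * (S⁻¹ * Z) = S⁻¹ * ((Ξ x s)⁻¹ * Z) := by
    intro x s j Z; rw [← Matrix.mul_assoc, ← hSiXii, Matrix.mul_assoc]
  -- shift identities
  have R1 : ∀ x s, Af (x+1) s = T⁻¹ * Af x s + ε • (W * (Y * (Ξ x s * K))) := by
    intro x s
    rw [hApEq, hAf]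
    rw [show L * (S * Ξ x s) * K = L * S * (Ξ x s * K) by simp only [Matrix.mul_assoc], hLS]
    simp only [Matrix.mul_add, Matrix.add_mul, Matrix.mul_sub, Matrix.sub_mul, smul_add, smul_sub, Matrix.mul_smul, Matrix.smul_mul, Matrix.mul_assoc]
    module
  have R2 : ∀ x s, Af (x-1) s = T * Af x s - ε • (T * (W * (Y * (S⁻¹ * (Ξ x s * K))))) := by
    intro x s
    rw [hAmEq, hAf]
    rw [show L * (S⁻¹ * Ξ x s) * K = L * S⁻¹ * (Ξ x s * K) by simp only [Matrix.mul_assoc], hLSi]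
    simp only [Matrix.mul_add, Matrix.add_mul, Matrix.mul_sub, Matrix.sub_mul, smul_add, smul_sub, Matrix.mul_smul, Matrix.smul_mul, Matrix.mul_assoc, qXiSi]
    module
  have R3 : ∀ x s, Bf (x+1) s = S⁻¹ * Bf x s + ε • (V * (U * (Th x s * L))) := by
    intro x s
    rw [hBpEq, hBf]
    rw [show K * (T * Th x s) * L = K * T * (Th x s * L) by simp only [Matrix.mul_assoc], hKT]
    simp only [Matrix.mul_add, Matrix.add_mul, Matrix.mul_sub, Matrix.sub_mul, smul_add, smul_sub, Matrix.mul_smul, Matrix.smul_mul, Matrix.mul_assoc]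
    module
  -- quantified rearranged forms
  have hR1q : ∀ (x : ℤ) (s : ℝ) {j : ℕ} (Z : Matrix (Fin n) (Fin j) ℂ),
      ε • (W * (Y * (Ξ x s * (K * Z)))) = Af (x+1) s * Z - T⁻¹ * (Af x s * Z) := by
    intro x s j Z
    have h := congrArg (fun G => G * Z) (R1 x s)
    simp only [Matrix.mul_add, Matrix.add_mul, Matrix.mul_sub, Matrix.sub_mul, smul_add, smul_sub, Matrix.mul_smul, Matrix.smul_mul, Matrix.mul_assoc] at h
    rw [h]; abel
  have hAmq : ∀ (x : ℤ) (s : ℝ) {j : ℕ} (Z : Matrix (Fin n) (Fin j) ℂ),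
      ε • (L * (S⁻¹ * (Ξ x s * (K * Z)))) = T * ((Th x s)⁻¹ * Z) - Af (x-1) s * Z := by
    intro x s j Z
    have h := congrArg (fun G => G * Z) (hAmEq x s)
    simp only [Matrix.mul_add, Matrix.add_mul, Matrix.mul_sub, Matrix.sub_mul, smul_add, smul_sub, Matrix.mul_smul, Matrix.smul_mul, Matrix.mul_assoc, qXiSi] at h
    rw [h]
    have h2 : L * (S⁻¹ * Ξ x s) * K * Z = L * (S⁻¹ * (Ξ x s * (K * Z))) := by
      simp only [Matrix.mul_assoc]
    abel
  -- solved-back forms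
  have hA1 : ∀ x s, Af x s = T * Af (x+1) s - ε • (T * (W * (Y * (Ξ x s * K)))) := by
    intro x s
    rw [R1 x s]
    simp only [Matrix.mul_add, Matrix.add_mul, Matrix.mul_sub, Matrix.sub_mul, smul_add, smul_sub, Matrix.mul_smul, Matrix.smul_mul, Matrix.mul_assoc, mcan3' hTU, Matrix.mul_one, Matrix.one_mul]
    module
  have hA2 : ∀ x s, Af x s = T⁻¹ * Af (x-1) s + ε • (W * (Y * (S⁻¹ * (Ξ x s * K)))) := by
    intro x s
    rw [R2 x s]
    simp only [Matrix.mul_add, Matrix.add_mul, Matrix.mul_sub, Matrix.sub_mul, smul_add, smul_sub, Matrix.mul_smul, Matrix.smul_mul, Matrix.mul_assoc, mcan4' hTU, Matrix.mul_one, Matrix.one_mul]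
    module
  -- intertwining
  have R6 : ∀ x s, K * (Th x s * Af x s) = Bf x s * (Ξ x s * K) := by
    intro x s
    rw [hAf, hBf]
    simp only [Matrix.mul_add, Matrix.add_mul, Matrix.mul_sub, Matrix.sub_mul, smul_add, smul_sub, Matrix.mul_smul, Matrix.smul_mul, Matrix.mul_assoc, mcan1' (hThU x s), mcan2' (hXiU x s),
      mcan3' (hThU x s), mcan4' (hXiU x s), Matrix.mul_one, Matrix.one_mul]
  have R6q : ∀ (x : ℤ) (s : ℝ) {j : ℕ} (Z : Matrix (Fin n) (Fin j) ℂ),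
      Bf x s * (Ξ x s * (K * Z)) = K * (Th x s * (Af x s * Z)) := by
    intro x s j Z
    have h := congrArg (fun G => G * Z) (R6 x s).symm
    simpa only [Matrix.mul_assoc] using h
  have R6iq : ∀ (x : ℤ) (s : ℝ) {j : ℕ} (Z : Matrix (Fin n) (Fin j) ℂ),
      (Bf x s)⁻¹ * (K * (Th x s * Z)) = Ξ x s * (K * ((Af x s)⁻¹ * Z)) := by
    intro x s j Z
    have h := R6q x s ((Af x s)⁻¹ * Z)
    rw [mcan3' (hAU x s)] at h
    rw [← h, mcan4' (hBU x s)]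
  have R6iiq : ∀ (x : ℤ) (s : ℝ) {j : ℕ} (Z : Matrix (Fin n) (Fin j) ℂ),
      (Bf x s)⁻¹ * (K * Z) = Ξ x s * (K * ((Af x s)⁻¹ * ((Th x s)⁻¹ * Z))) := by
    intro x s j Z
    have h := R6iq x s ((Th x s)⁻¹ * Z)
    rwa [mcan3' (hThU x s)] at h
  have R5 : ∀ x s, Af x s * (Th x s * L) = L * (Ξ x s * Bf x s) := by
    intro x s
    rw [hAf, hBf]
    simp only [Matrix.mul_add, Matrix.add_mul, Matrix.mul_sub, Matrix.sub_mul, smul_add, smul_sub, Matrix.mul_smul, Matrix.smul_mul, Matrix.mul_assoc, mcan1' (hXiU x s), mcan2' (hThU x s),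
      mcan3' (hXiU x s), mcan4' (hThU x s), Matrix.mul_one, Matrix.one_mul]
  have R5q : ∀ (x : ℤ) (s : ℝ) {j : ℕ} (Z : Matrix (Fin n) (Fin j) ℂ),
      Th x s * (L * ((Bf x s)⁻¹ * Z)) = (Af x s)⁻¹ * (L * (Ξ x s * Z)) := by
    intro x s j Z
    have h := congrArg (fun G => (Af x s)⁻¹ * (G * ((Bf x s)⁻¹ * Z))) (R5 x s)
    simpa only [Matrix.mul_assoc, mcan4' (hAU x s), mcan3' (hBU x s)] using h
  have R7 : ∀ x s, (Bf x s)⁻¹ = Ξ x s + ε • (Ξ x s * (K * ((Af x s)⁻¹ * (L * Ξ x s)))) := by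
    intro x s
    apply Matrix.inv_eq_right_inv
    have h6 := R6q x s ((Af x s)⁻¹ * (L * Ξ x s))
    rw [mcan3' (hAU x s)] at h6
    rw [Matrix.mul_add, Matrix.mul_smul, h6, hBf]
    simp only [Matrix.mul_add, Matrix.add_mul, Matrix.mul_sub, Matrix.sub_mul, smul_add, smul_sub, Matrix.mul_smul, Matrix.smul_mul, Matrix.mul_assoc, mcan2' (hXiU x s)]
    module
  -- G1
  have G1 : ∀ x s, Ξ x s * (K * (Af x s)⁻¹) - S⁻¹ * (Ξ x s * (K * (Af (x-1) s)⁻¹))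
      + (Bf x s)⁻¹ * (V * (U * (Af (x-1) s)⁻¹)) = 0 := by
    intro x s
    have qv : (Bf x s)⁻¹ * (V * (U * (Af (x-1) s)⁻¹))
        = (Bf x s)⁻¹ * (S⁻¹ * (K * (Af (x-1) s)⁻¹)) - (Bf x s)⁻¹ * (K * (T * (Af (x-1) s)⁻¹)) := by
      have h := congrArg (fun G => (Bf x s)⁻¹ * (G * (Af (x-1) s)⁻¹)) hSyl.symm
      simpa only [Matrix.mul_add, Matrix.add_mul, Matrix.mul_sub, Matrix.sub_mul, smul_add, smul_sub, Matrix.mul_smul, Matrix.smul_mul, Matrix.mul_assoc] using h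
    have r6 : (Bf x s)⁻¹ * (K * (T * (Af (x-1) s)⁻¹))
        = Ξ x s * (K * ((Af x s)⁻¹ * (T * ((Th x s)⁻¹ * (Af (x-1) s)⁻¹)))) := by
      have h := R6iiq x s (T * (Af (x-1) s)⁻¹)
      simpa only [qThiT] using h
    have rq : (Bf x s)⁻¹ * (S⁻¹ * (K * (Af (x-1) s)⁻¹))
        = S⁻¹ * (Ξ x s * (K * (Af (x-1) s)⁻¹))
          + ε • (Ξ x s * (K * ((Af x s)⁻¹ * (L * (S⁻¹ * (Ξ x s * (K * (Af (x-1) s)⁻¹))))))) := by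
      have h := congrArg (fun G => G * (S⁻¹ * (K * (Af (x-1) s)⁻¹))) (R7 x s)
      simpa only [Matrix.mul_add, Matrix.add_mul, Matrix.mul_sub, Matrix.sub_mul, smul_add, smul_sub, Matrix.mul_smul, Matrix.smul_mul, Matrix.mul_assoc, qXiSi] using h
    have am : ε • (Ξ x s * (K * ((Af x s)⁻¹ * (L * (S⁻¹ * (Ξ x s * (K * (Af (x-1) s)⁻¹)))))))
        = Ξ x s * (K * ((Af x s)⁻¹ * (T * ((Th x s)⁻¹ * (Af (x-1) s)⁻¹)))) - Ξ x s * (K * (Af x s)⁻¹) := by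
      have h := congrArg (fun G => Ξ x s * (K * ((Af x s)⁻¹ * G))) (hAmq x s ((Af (x-1) s)⁻¹))
      simpa only [Matrix.mul_add, Matrix.add_mul, Matrix.mul_sub, Matrix.sub_mul, smul_add, smul_sub, Matrix.mul_smul, Matrix.smul_mul, Matrix.mul_assoc, mcan1' (hAU (x-1) s), Matrix.mul_one] using h
    linear_combination (norm := module) qv + rq + am - r6
  -- G3
  have G3 : ∀ x s, S⁻¹ * Bf x s + ε • (V * (U * (Th x s * L)))
      = Bf x s * S⁻¹ + K * (Th x s * (T * (ε • (W * (Y * S⁻¹))))) := by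
    intro x s
    have v2 : ε • (V * (U * (Th x s * L)))
        = ε • (S⁻¹ * (K * (Th x s * L))) - ε • (K * (T * (Th x s * L))) := by
      have h := congrArg (fun G => ε • (G * (Th x s * L))) hSyl.symm
      simpa only [Matrix.mul_add, Matrix.add_mul, Matrix.mul_sub, Matrix.sub_mul, smul_add, smul_sub, Matrix.mul_smul, Matrix.smul_mul, Matrix.mul_assoc] using h
    have w2 : ε • (K * (Th x s * (L * S⁻¹))) - ε • (K * (T * (Th x s * L)))
        = ε • (K * (T * (Th x s * (W * (Y * S⁻¹))))) := by
      have h := congrArg (fun G => ε • (K * (Th x s * (T * (G * S⁻¹))))) hSylc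
      simpa only [Matrix.mul_add, Matrix.add_mul, Matrix.mul_sub, Matrix.sub_mul, smul_add, smul_sub, Matrix.mul_smul, Matrix.smul_mul, Matrix.mul_assoc, mcan1' hS, mcan3' hTU, qThT, Matrix.mul_one] using h
    rw [hBf x s]
    simp only [Matrix.mul_add, Matrix.add_mul, Matrix.mul_sub, Matrix.sub_mul, smul_add, smul_sub, Matrix.mul_smul, Matrix.smul_mul, Matrix.mul_assoc, hSiXii, qThT, Matrix.mul_one, Matrix.one_mul]
    linear_combination (norm := module) v2 + w2
  -- E-chain towards G2
  have E2 : ∀ x s, (Bf x s)⁻¹ * Bf (x+1) s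
      = S⁻¹ + ε • (Ξ x s * (K * ((Af x s)⁻¹ * (T * (W * (Y * S⁻¹)))))) := by
    intro x s
    have h := congrArg (fun G => (Bf x s)⁻¹ * G) (G3 x s)
    simp only [Matrix.mul_add, Matrix.add_mul, Matrix.mul_sub, Matrix.sub_mul, smul_add, smul_sub, Matrix.mul_smul, Matrix.smul_mul, Matrix.mul_assoc, mcan4' (hBU x s)] at h
    rw [R6iq x s (T * (W * (Y * S⁻¹)))] at h
    rw [R3 x s]
    simp only [Matrix.mul_add, Matrix.add_mul, Matrix.mul_sub, Matrix.sub_mul, smul_add, smul_sub, Matrix.mul_smul, Matrix.smul_mul, Matrix.mul_assoc]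
    exact h
  have E4 : ∀ x s, ε • (Af (x+1) s * ((Af x s)⁻¹ * (T * (W * (Y * S⁻¹)))))
      = ε • (W * (Y * S⁻¹))
        + ε • (ε • (W * (Y * (Ξ x s * (K * ((Af x s)⁻¹ * (T * (W * (Y * S⁻¹))))))))) := by
    intro x s
    have h := congrArg (fun G => ε • (G * ((Af x s)⁻¹ * (T * (W * (Y * S⁻¹)))))) (R1 x s)
    simpa only [Matrix.mul_add, Matrix.add_mul, Matrix.mul_sub, Matrix.sub_mul, smul_add, smul_sub, Matrix.mul_smul, Matrix.smul_mul, Matrix.mul_assoc, smul_add, mcan3' (hAU x s), mcan4' hTU] using h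
  have E5 : ∀ x s, ε • (W * (Y * ((Bf x s)⁻¹ * Bf (x+1) s)))
      = ε • (Af (x+1) s * ((Af x s)⁻¹ * (T * (W * (Y * S⁻¹))))) := by
    intro x s
    have h2 := congrArg (fun G => ε • (W * (Y * G))) (E2 x s)
    simp only [Matrix.mul_add, Matrix.add_mul, Matrix.mul_sub, Matrix.sub_mul, smul_add, smul_sub, Matrix.mul_smul, Matrix.smul_mul, Matrix.mul_assoc, smul_add] at h2
    rw [h2, E4 x s]
  have E6 : ∀ x s, ε • ((Af (x+1) s)⁻¹ * (W * (Y * (Bf x s)⁻¹)))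
      = ε • ((Af x s)⁻¹ * (T * (W * (Y * (S⁻¹ * (Bf (x+1) s)⁻¹))))) := by
    intro x s
    have h := congrArg (fun G => (Af (x+1) s)⁻¹ * (G * (Bf (x+1) s)⁻¹)) (E5 x s)
    simpa only [Matrix.mul_add, Matrix.add_mul, Matrix.mul_sub, Matrix.sub_mul, smul_add, smul_sub, Matrix.mul_smul, Matrix.smul_mul, Matrix.mul_assoc, mcan1' (hBU (x+1) s), mcan4' (hAU (x+1) s), Matrix.mul_one] using h
  -- the three conclusions
  refine ⟨?_, ?_, ?_, hApEq, hAmEq⟩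
  · intro x s
    have zc1 : (Af x s)⁻¹ * (Af (x+1) s * (Af x s)⁻¹)
        = (Af x s)⁻¹ * T⁻¹ + ε • ((Af x s)⁻¹ * (W * (Y * (Ξ x s * (K * (Af x s)⁻¹))))) := by
      have h := congrArg (fun G => (Af x s)⁻¹ * (G * (Af x s)⁻¹)) (R1 x s)
      simpa only [Matrix.mul_add, Matrix.add_mul, Matrix.mul_sub, Matrix.sub_mul, smul_add, smul_sub, Matrix.mul_smul, Matrix.smul_mul, Matrix.mul_assoc, mcan1' (hAU x s), Matrix.mul_one] using h
    have zc2 : (Af x s)⁻¹ * (Af (x-1) s * (Af x s)⁻¹)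
        = (Af x s)⁻¹ * T - ε • ((Af x s)⁻¹ * (T * (W * (Y * (S⁻¹ * (Ξ x s * (K * (Af x s)⁻¹))))))) := by
      have h := congrArg (fun G => (Af x s)⁻¹ * (G * (Af x s)⁻¹)) (R2 x s)
      simpa only [Matrix.mul_add, Matrix.add_mul, Matrix.mul_sub, Matrix.sub_mul, smul_add, smul_sub, Matrix.mul_smul, Matrix.smul_mul, Matrix.mul_assoc, mcan1' (hAU x s), Matrix.mul_one] using h
    have zc3 : (Af (x+1) s)⁻¹
        = (Af x s)⁻¹ * T - ε • ((Af x s)⁻¹ * (T * (W * (Y * (Ξ x s * (K * (Af (x+1) s)⁻¹)))))) := by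
      have h := congrArg (fun G => (Af x s)⁻¹ * (G * (Af (x+1) s)⁻¹)) (hA1 x s)
      simpa only [Matrix.mul_add, Matrix.add_mul, Matrix.mul_sub, Matrix.sub_mul, smul_add, smul_sub, Matrix.mul_smul, Matrix.smul_mul, Matrix.mul_assoc, mcan1' (hAU (x+1) s), mcan4' (hAU x s), Matrix.mul_one] using h
    have zc4 : (Af (x-1) s)⁻¹
        = (Af x s)⁻¹ * T⁻¹ + ε • ((Af x s)⁻¹ * (W * (Y * (S⁻¹ * (Ξ x s * (K * (Af (x-1) s)⁻¹)))))) := by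
      have h := congrArg (fun G => (Af x s)⁻¹ * (G * (Af (x-1) s)⁻¹)) (hA2 x s)
      simpa only [Matrix.mul_add, Matrix.add_mul, Matrix.mul_sub, Matrix.sub_mul, smul_add, smul_sub, Matrix.mul_smul, Matrix.smul_mul, Matrix.mul_assoc, mcan1' (hAU (x-1) s), mcan4' (hAU x s), Matrix.mul_one] using h
    have gc1 := congrArg (fun G => ε • ((Af x s)⁻¹ * (W * (Y * G)))) (G1 x s)
    simp only [Matrix.mul_add, Matrix.add_mul, Matrix.mul_sub, Matrix.sub_mul, smul_add, smul_sub, Matrix.mul_smul, Matrix.smul_mul, Matrix.mul_assoc, Matrix.mul_zero, smul_zero] at gc1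
    have g1b := G1 (x+1) s
    rw [add_sub_cancel_right, hXp x s] at g1b
    simp only [Matrix.mul_assoc, mcan4' hS] at g1b
    have gc2 := congrArg (fun G => ε • ((Af x s)⁻¹ * (T * (W * (Y * (S⁻¹ * G)))))) g1b
    simp only [Matrix.mul_add, Matrix.add_mul, Matrix.mul_sub, Matrix.sub_mul, smul_add, smul_sub, Matrix.mul_smul, Matrix.smul_mul, Matrix.mul_assoc, Matrix.mul_zero, smul_zero, mcan4' hS] at gc2
    have ec6 := congrArg (fun G => G * (V * (U * (Af x s)⁻¹))) (E6 x s)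
    simp only [Matrix.mul_add, Matrix.add_mul, Matrix.mul_sub, Matrix.sub_mul, smul_add, smul_sub, Matrix.mul_smul, Matrix.smul_mul, Matrix.mul_assoc] at ec6
    simp only [Matrix.mul_add, Matrix.add_mul, Matrix.mul_sub, Matrix.sub_mul, smul_add, smul_sub, Matrix.mul_smul, Matrix.smul_mul, Matrix.mul_assoc, mcan4' (hAU x s)]
    linear_combination (norm := module) -zc1 - zc2 + zc3 + zc4 - gc1 - gc2 - ec6
  · intro x s
    have rc7 : (Af (x+1) s)⁻¹ * (W * (Y * (Bf x s)⁻¹))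
        = (Af (x+1) s)⁻¹ * (W * (Y * Ξ x s))
          + ε • ((Af (x+1) s)⁻¹ * (W * (Y * (Ξ x s * (K * ((Af x s)⁻¹ * (L * Ξ x s))))))) := by
      have h := congrArg (fun G => (Af (x+1) s)⁻¹ * (W * (Y * G))) (R7 x s)
      simpa only [Matrix.mul_add, Matrix.add_mul, Matrix.mul_sub, Matrix.sub_mul, smul_add, smul_sub, Matrix.mul_smul, Matrix.smul_mul, Matrix.mul_assoc] using h
    have rr1 : ε • ((Af (x+1) s)⁻¹ * (W * (Y * (Ξ x s * (K * ((Af x s)⁻¹ * (L * Ξ x s)))))))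
        = (Af x s)⁻¹ * (L * Ξ x s) - (Af (x+1) s)⁻¹ * (T⁻¹ * (L * Ξ x s)) := by
      have h := congrArg (fun G => (Af (x+1) s)⁻¹ * G) (hR1q x s ((Af x s)⁻¹ * (L * Ξ x s)))
      simpa only [Matrix.mul_add, Matrix.add_mul, Matrix.mul_sub, Matrix.sub_mul, smul_add, smul_sub, Matrix.mul_smul, Matrix.smul_mul, Matrix.mul_assoc, mcan4' (hAU (x+1) s), mcan3' (hAU x s)] using h
    have syl : (Af (x+1) s)⁻¹ * (T⁻¹ * (L * Ξ x s)) - (Af (x+1) s)⁻¹ * (L * (S * Ξ x s))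
        = (Af (x+1) s)⁻¹ * (W * (Y * Ξ x s)) := by
      have h := congrArg (fun G => (Af (x+1) s)⁻¹ * (G * Ξ x s)) hSylc
      simpa only [Matrix.mul_add, Matrix.add_mul, Matrix.mul_sub, Matrix.sub_mul, smul_add, smul_sub, Matrix.mul_smul, Matrix.smul_mul, Matrix.mul_assoc] using h
    linear_combination (norm := module) rc7 + rr1 - syl
  · intro x s
    have h := R5q x s (1 : Matrix (Fin n) (Fin n) ℂ)
    simpa only [Matrix.mul_one] using h

end Prelude

section Reassemble

variable {nn mm : ℕ}

theorem reassemble (f : ℝ → Matrix (Fin mm) (Fin nn) ℂ) (f' : Matrix (Fin mm) (Fin nn) ℂ) (t : ℝ)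
    (h : ∀ i j, HasDerivAt (fun s => f s i j) (f' i j) t) :
    HasDerivAt f f' t := by
  apply hasDerivAt_pi.mpr
  intro i
  apply hasDerivAt_pi.mpr
  intro j
  exact h i j

end Reassemble

set_option maxHeartbeats 4000000

/-- Solutions of the matrix Ablowitz–Ladik equations with complex-conjugation reduction. -/
theorem semidiscrete_matrix_NLS_cc_reduction_solutions
    {n m : ℕ}
    (S : Matrix (Fin n) (Fin n) ℂ) (hS : IsUnit S)
    (U : Matrix (Fin m) (Fin n) ℂ) (V : Matrix (Fin n) (Fin m) ℂ)
    (K : Matrix (Fin n) (Fin n) ℂ)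
    (ε : ℂ) (hε : ε = 1 ∨ ε = -1)
    (hSyl : S⁻¹ * K - K * mconj S = V * U)
    (Ξ : ℤ → ℝ → Matrix (Fin n) (Fin n) ℂ)
    (hΞ : ∀ (x : ℤ) (t : ℝ),
      Ξ x t = S ^ x * NormedSpace.exp ((-(Complex.I * t)) • (S + S⁻¹ - 2)))
    (hinv1 : ∀ (x : ℤ) (t : ℝ), IsUnit ((mconj (Ξ x t))⁻¹ - ε • (mconj K * Ξ x t * K)))
    (hinv2 : ∀ (x : ℤ) (t : ℝ), IsUnit ((Ξ x t)⁻¹ - ε • (K * mconj (Ξ x t) * mconj K)))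
    (q : ℤ → ℝ → Matrix (Fin m) (Fin m) ℂ)
    (p : ℤ → ℝ → Matrix (Fin m) (Fin m) ℂ)
    (hq : ∀ (x : ℤ) (t : ℝ),
      q x t = U * ((mconj (Ξ x t))⁻¹ - ε • (mconj K * Ξ x t * K))⁻¹ * mconj V)
    (hp : ∀ (x : ℤ) (t : ℝ),
      p x t = ε • (U * mconj (Ξ x t) * mconj K
        * ((Ξ x t)⁻¹ - ε • (K * mconj (Ξ x t) * mconj K))⁻¹ * V)) :
    (∀ (x : ℤ) (t : ℝ),
      Complex.I • pdt' q x t + q (x + 1) t - (2 : ℂ) • q x t + q (x - 1) t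
        - ε • (q (x + 1) t * mconj (q x t) * q x t + q x t * mconj (q x t) * q (x - 1) t)
        = 0) ∧
    (∀ (x : ℤ) (t : ℝ), p (x + 1) t - p x t = -(ε • (q (x + 1) t * mconj (q x t)))) := by
  have hdetS := (Matrix.isUnit_iff_isUnit_det S).mp hS
  set T : Matrix (Fin n) (Fin n) ℂ := mconj S with hTdef
  set L : Matrix (Fin n) (Fin n) ℂ := mconj K with hLdef
  set W : Matrix (Fin n) (Fin m) ℂ := mconj V with hWdef
  set Y : Matrix (Fin m) (Fin n) ℂ := mconj U with hYdef
  set M0 : Matrix (Fin n) (Fin n) ℂ := S + S⁻¹ - 2 with hM0def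
  set N : Matrix (Fin n) (Fin n) ℂ := (-Complex.I) • M0 with hNdef
  have hTU : IsUnit T := mconj_isUnit hS
  have h2mul : ∀ (X : Matrix (Fin n) (Fin n) ℂ), (2 : Matrix (Fin n) (Fin n) ℂ) * X = (2:ℂ) • X := by
    intro X; rw [two_mul, two_smul]
  have h2mul' : ∀ (X : Matrix (Fin n) (Fin n) ℂ), X * (2 : Matrix (Fin n) (Fin n) ℂ) = (2:ℂ) • X := by
    intro X; rw [mul_two, two_smul]
  have hSM0 : S * M0 = M0 * S := by
    rw [hM0def, mul_sub, sub_mul, mul_add, add_mul, mcan1 hS, mcan2 hS, h2mul S, h2mul' S]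
  have hSN : S * N = N * S := by
    rw [hNdef, mul_smul_comm, smul_mul_assoc, hSM0]
  have hSxU : ∀ x : ℤ, IsUnit (S ^ x) := by
    intro x
    have h1 : S ^ x * S ^ (-x) = 1 := by
      rw [← Matrix.zpow_add hdetS, add_neg_cancel, zpow_zero]
    rw [Matrix.isUnit_iff_isUnit_det]
    have h2 : (S ^ x).det * (S ^ (-x)).det = 1 := by rw [← Matrix.det_mul, h1, Matrix.det_one]
    exact IsUnit.of_mul_eq_one _ h2
  have hSxS : ∀ x : ℤ, S ^ x * S = S * S ^ x := by
    intro x; rw [← Matrix.zpow_add_one hdetS, ← Matrix.zpow_one_add hdetS, add_comm]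
  have hSxN : ∀ x : ℤ, S ^ x * N = N * S ^ x := by
    intro x
    have hSxSi : S ^ x * S⁻¹ = S⁻¹ * S ^ x := (comm_inv hS (hSxS x).symm).symm
    rw [hNdef, mul_smul_comm, smul_mul_assoc, hM0def]
    rw [mul_sub, sub_mul, mul_add, add_mul, hSxS, hSxSi, h2mul (S^x), h2mul' (S^x)]
  have hXiForm : ∀ (x : ℤ) (s : ℝ), Ξ x s = S ^ x * NormedSpace.exp (s • N) := by
    intro x s
    rw [hΞ]
    congr 1
    rw [hNdef, ← smul_assoc]
    congr 1
    rw [Complex.real_smul]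
    ring_nf
  have hXiU : ∀ (x : ℤ) (s : ℝ), IsUnit (Ξ x s) := by
    intro x s
    rw [hXiForm]
    exact (hSxU x).mul (Matrix.isUnit_exp _)
  have hThU : ∀ (x : ℤ) (s : ℝ), IsUnit (mconj (Ξ x s)) := fun x s => mconj_isUnit (hXiU x s)
  have hSe : ∀ (s : ℝ), S * NormedSpace.exp (s • N) = NormedSpace.exp (s • N) * S := by
    intro s
    have harg : S * (s • N) * S⁻¹ = s • N := by
      rw [mul_smul_comm, smul_mul_assoc, hSN, Matrix.mul_assoc, mcan1 hS, Matrix.mul_one]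
    have h := Matrix.exp_conj S (s • N) hS
    rw [harg] at h
    calc S * NormedSpace.exp (s • N)
        = S * NormedSpace.exp (s • N) * (S⁻¹ * S) := by rw [mcan2 hS, Matrix.mul_one]
      _ = (S * NormedSpace.exp (s • N) * S⁻¹) * S := by simp only [Matrix.mul_assoc]
      _ = NormedSpace.exp (s • N) * S := by rw [← h]
  have hcommSXi : ∀ (x : ℤ) (s : ℝ), S * Ξ x s = Ξ x s * S := by
    intro x s
    rw [hXiForm, ← Matrix.mul_assoc, ← hSxS, Matrix.mul_assoc, hSe, ← Matrix.mul_assoc]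
  have hXp : ∀ (x : ℤ) (s : ℝ), Ξ (x+1) s = S * Ξ x s := by
    intro x s
    rw [hXiForm, hXiForm, Matrix.zpow_add_one hdetS, hSxS, Matrix.mul_assoc]
  have hXm : ∀ (x : ℤ) (s : ℝ), Ξ (x-1) s = S⁻¹ * Ξ x s := by
    intro x s
    have h := hXp (x-1) s
    rw [sub_add_cancel] at h
    rw [h, mcan4 hS]
  have hThp : ∀ (x : ℤ) (s : ℝ), mconj (Ξ (x+1) s) = T * mconj (Ξ x s) := by
    intro x s; rw [hXp, mconj_mul]
  have hThm : ∀ (x : ℤ) (s : ℝ), mconj (Ξ (x-1) s) = T⁻¹ * mconj (Ξ x s) := by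
    intro x s; rw [hXm, mconj_mul, mconj_inv hS]
  have hTTh : ∀ (x : ℤ) (s : ℝ), T * mconj (Ξ x s) = mconj (Ξ x s) * T := by
    intro x s; rw [hTdef, ← mconj_mul, ← mconj_mul, hcommSXi]
  have hSylc : T⁻¹ * L - L * S = W * Y := by
    have h := congrArg mconj hSyl
    rwa [mconj_sub, mconj_mul, mconj_mul, mconj_mul, mconj_inv hS, hTdef, mconj_mconj] at h
  -- definitions of the two one-parameter families
  set Af : ℤ → ℝ → Matrix (Fin n) (Fin n) ℂ :=
    fun x' s => (mconj (Ξ x' s))⁻¹ - ε • (L * Ξ x' s * K) with hAfdef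
  set Bf : ℤ → ℝ → Matrix (Fin n) (Fin n) ℂ :=
    fun x' s => (Ξ x' s)⁻¹ - ε • (K * mconj (Ξ x' s) * L) with hBfdef
  have hAf : ∀ (x : ℤ) (s : ℝ), Af x s = (mconj (Ξ x s))⁻¹ - ε • (L * Ξ x s * K) :=
    fun x s => rfl
  have hBf : ∀ (x : ℤ) (s : ℝ), Bf x s = (Ξ x s)⁻¹ - ε • (K * mconj (Ξ x s) * L) :=
    fun x s => rfl
  have hAU : ∀ (x : ℤ) (s : ℝ), IsUnit (Af x s) := fun x s => by rw [hAf]; exact hinv1 x s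
  have hBU : ∀ (x : ℤ) (s : ℝ), IsUnit (Bf x s) := fun x s => by rw [hBf]; exact hinv2 x s
  obtain ⟨C1, C2, C3, hApEq, hAmEq⟩ :=
    core S T K L U Y V W ε hS hTU Ξ (fun x s => mconj (Ξ x s)) hXiU hThU hXp hXm hThp hThm
      hcommSXi hTTh hSyl hSylc Af Bf hAf hBf hAU hBU
  -- mconj facts about q
  have hεc : (starRingEnd ℂ) ε = ε := by rcases hε with h | h <;> simp [h]
  have hLc : mconj L = K := by rw [hLdef, mconj_mconj]
  have hAB : ∀ (x : ℤ) (s : ℝ), mconj (Af x s) = Bf x s := by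
    intro x s
    rw [hAf, hBf, mconj_sub, mconj_inv (hThU x s), mconj_mconj, mconj_smul, hεc,
      mconj_mul, mconj_mul, hLc, ← hLdef]
  have hqA : ∀ (x : ℤ) (s : ℝ), q x s = U * (Af x s)⁻¹ * W := by
    intro x s; rw [hq x s, ← hAf x s]
  have hpB : ∀ (x : ℤ) (s : ℝ), p x s = ε • (U * mconj (Ξ x s) * L * (Bf x s)⁻¹ * V) := by
    intro x s; rw [hp x s, ← hBf x s]
  have hqc : ∀ (x : ℤ) (s : ℝ), mconj (q x s) = Y * ((Bf x s)⁻¹ * V) := by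
    intro x s
    rw [hqA x s, mconj_mul, mconj_mul, ← hYdef, mconj_inv (hAU x s), hAB x s,
      hWdef, mconj_mconj, Matrix.mul_assoc]
  -- the p-formula via the intertwining relation
  have hpC : ∀ (x : ℤ) (s : ℝ), p x s = ε • (U * ((Af x s)⁻¹ * (L * (Ξ x s * V)))) := by
    intro x s
    rw [hpB x s]
    have h := congrArg (fun G => ε • (U * (G * V))) (C3 x s)
    simp only [Matrix.mul_assoc] at h ⊢
    exact h
  -- equation 2
  have heq2 : ∀ (x : ℤ) (t : ℝ),
      p (x + 1) t - p x t = -(ε • (q (x + 1) t * mconj (q x t))) := by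
    intro x t
    rw [hpC (x+1) t, hpC x t, hqA (x+1) t, hqc x t, hXp x t]
    have cc2 := congrArg (fun G => ε • (U * (G * V))) (C2 x t)
    simp only [Matrix.mul_add, Matrix.add_mul, Matrix.mul_sub, Matrix.sub_mul, smul_add, smul_sub, Matrix.mul_smul, Matrix.smul_mul, Matrix.mul_assoc, Matrix.zero_mul, Matrix.mul_zero, smul_zero] at cc2
    simp only [Matrix.mul_add, Matrix.add_mul, Matrix.mul_sub, Matrix.sub_mul, smul_add, smul_sub, Matrix.mul_smul, Matrix.smul_mul, Matrix.mul_assoc]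
    linear_combination (norm := module) cc2
  -- the time derivative
  set M1 : Matrix (Fin n) (Fin n) ℂ := T + T⁻¹ - 2 with hM1def
  set Nb : Matrix (Fin n) (Fin n) ℂ := (-Complex.I) • M1 with hNbdef
  have hM0c : mconj M0 = M1 := by
    rw [hM0def, hM1def, mconj_sub, mconj_add, mconj_inv hS, mconj_two, ← hTdef]
  have hThInvForm : ∀ (x : ℤ) (s : ℝ),
      (mconj (Ξ x s))⁻¹ = NormedSpace.exp (s • Nb) * mconj ((S ^ x)⁻¹) := by
    intro x s
    rw [← mconj_inv (hXiU x s), hXiForm x s, Matrix.mul_inv_rev]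
    rw [show (NormedSpace.exp (s • N))⁻¹ = NormedSpace.exp (s • (-N)) by
      rw [← Matrix.exp_neg, smul_neg]]
    rw [mconj_mul, mconj_exp]
    congr 2
    rw [mconj_smulR, hNdef, mconj_neg, mconj_smul, hM0c]
    simp [hNbdef]
  have hAform : ∀ (x : ℤ) (s : ℝ), Af x s
      = NormedSpace.exp (s • Nb) * mconj ((S ^ x)⁻¹)
        - ε • (L * S ^ x * NormedSpace.exp (s • N) * K) := by
    intro x s
    rw [hAf, hThInvForm, hXiForm]
    simp only [Matrix.mul_assoc]
  have hqd : ∀ (x : ℤ) (t : ℝ) (i j : Fin m),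
      HasDerivAt (fun s => (U * (Af x s)⁻¹ * W) i j)
        ((-(U * ((Af x t)⁻¹
            * (Nb * NormedSpace.exp (t • Nb) * mconj ((S ^ x)⁻¹)
              - ε • (L * S ^ x * (N * NormedSpace.exp (t • N)) * K))
            * (Af x t)⁻¹) * W)) i j) t := by
    intro x t i j
    exact entryDeriv U W Nb (mconj ((S ^ x)⁻¹)) (L * S ^ x) N K ε (fun s => Af x s)
      (hAform x) (fun s => hAU x s) t i j
  have qSxN : ∀ (x : ℤ) (Z : Matrix (Fin n) (Fin n) ℂ), S ^ x * (N * Z) = N * (S ^ x * Z) := by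
    intro x Z; rw [← Matrix.mul_assoc, hSxN, Matrix.mul_assoc]
  have hAd2 : ∀ (x : ℤ) (t : ℝ),
      Nb * NormedSpace.exp (t • Nb) * mconj ((S ^ x)⁻¹)
        - ε • (L * S ^ x * (N * NormedSpace.exp (t • N)) * K)
      = Nb * (mconj (Ξ x t))⁻¹ - ε • (L * (N * Ξ x t) * K) := by
    intro x t
    rw [hThInvForm x t, hXiForm x t]
    simp only [Matrix.mul_assoc, qSxN]
  have hpdt : ∀ (x : ℤ) (t : ℝ),
      pdt' q x t = -(U * ((Af x t)⁻¹
        * (Nb * (mconj (Ξ x t))⁻¹ - ε • (L * (N * Ξ x t) * K)) * (Af x t)⁻¹) * W) := by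
    intro x t
    have hfun : (fun s => q x s) = fun s => U * (Af x s)⁻¹ * W := funext fun s => hqA x s
    have h := hqd x t
    simp only [hAd2 x t] at h
    show deriv (fun s => q x s) t = _
    rw [hfun]
    exact (reassemble _ _ t h).deriv
  -- the scalar identities for Complex.I
  have hINb : Complex.I • Nb = M1 := by
    rw [hNbdef, smul_smul]
    norm_num [Complex.I_mul_I]
  have hIN : Complex.I • N = M0 := by
    rw [hNdef, smul_smul]
    norm_num [Complex.I_mul_I]
  have hD1 : ∀ (x : ℤ) (t : ℝ),
      Complex.I • (Nb * (mconj (Ξ x t))⁻¹ - ε • (L * (N * Ξ x t) * K))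
        = Af (x+1) t + Af (x-1) t - (2:ℂ) • Af x t := by
    intro x t
    have h1 : Complex.I • (Nb * (mconj (Ξ x t))⁻¹) = M1 * (mconj (Ξ x t))⁻¹ := by
      rw [← Matrix.smul_mul, hINb]
    have h2 : Complex.I • (ε • (L * (N * Ξ x t) * K)) = ε • (L * (M0 * Ξ x t) * K) := by
      rw [smul_comm]
      congr 1
      rw [← Matrix.smul_mul, ← Matrix.mul_smul, ← Matrix.smul_mul, hIN]
    rw [smul_sub, h1, h2, hApEq x t, hAmEq x t, hAf x t, hM1def, hM0def]
    simp only [Matrix.mul_add, Matrix.add_mul, Matrix.mul_sub, Matrix.sub_mul, smul_add, smul_sub, Matrix.mul_smul, Matrix.smul_mul, Matrix.mul_assoc, h2mul, h2mul']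
    module
  -- equation 1
  have heq1 : ∀ (x : ℤ) (t : ℝ),
      Complex.I • pdt' q x t + q (x + 1) t - (2 : ℂ) • q x t + q (x - 1) t
        - ε • (q (x + 1) t * mconj (q x t) * q x t + q x t * mconj (q x t) * q (x - 1) t)
        = 0 := by
    intro x t
    rw [hpdt x t, hqc x t, hqA (x+1) t, hqA x t, hqA (x-1) t]
    have hd1c := congrArg
      (fun G => U * ((Af x t)⁻¹ * (G * ((Af x t)⁻¹ * W)))) (hD1 x t)
    simp only [Matrix.mul_add, Matrix.add_mul, Matrix.mul_sub, Matrix.sub_mul, smul_add, smul_sub, Matrix.mul_smul, Matrix.smul_mul, Matrix.mul_assoc, smul_smul] at hd1c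
    have cc1 := congrArg (fun G => U * (G * W)) (C1 x t)
    simp only [Matrix.mul_add, Matrix.add_mul, Matrix.mul_sub, Matrix.sub_mul, smul_add, smul_sub, Matrix.mul_smul, Matrix.smul_mul, Matrix.mul_assoc, Matrix.zero_mul, Matrix.mul_zero, smul_zero] at cc1
    simp only [Matrix.mul_add, Matrix.add_mul, Matrix.mul_sub, Matrix.sub_mul, smul_add, smul_sub, Matrix.mul_smul, Matrix.smul_mul, Matrix.mul_assoc, smul_smul]
    linear_combination (norm := module) cc1 - hd1c
  exact ⟨heq1, heq2⟩
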